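/- Let Θ have the density f(θ) = Φ(ε(a + bθ − ȳ)/ω)·φ((θ − m)/s) / (s·Φ(ε(a + bm − ȳ)/√(ω² + s²b²))) with s > 0, ω > 0, ε ∈ {+1,−1}. Then E[Θ] = m + ε·b·s²/√(ω² + s²b²) · φ((a + bm − ȳ)/√(ω² + s²b²)) / Φ(ε(a + bm − ȳ)/√(ω² + s²b²)). -/

import Mathlib

open MeasureTheory ProbabilityTheory Real Set Filter

/-- Standard normal density. -/
noncomputable def stdNormalPDF (z : ℝ) : ℝ := (Real.sqrt (2 * Real.pi))⁻¹ * Real.exp (-z ^ 2 / 2)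

/-- Standard normal cumulative distribution function. -/
noncomputable def stdNormalCDF (z : ℝ) : ℝ := ∫ t in Set.Iic z, stdNormalPDF t

lemma pdf_even (z : ℝ) : stdNormalPDF (-z) = stdNormalPDF z := by
  unfold stdNormalPDF; rw [neg_pow]; ring_nf

lemma pdf_tendsto_atTop : Tendsto stdNormalPDF atTop (nhds 0) := by
  have h1 : Tendsto (fun z : ℝ => -z ^ 2 / 2) atTop atBot := by
    apply Filter.Tendsto.atBot_div_const (by norm_num : (0:ℝ) < 2)
    exact tendsto_neg_atBot_iff.mpr (tendsto_pow_atTop (by norm_num))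
  have h2 : Tendsto (fun z : ℝ => Real.exp (-z ^ 2 / 2)) atTop (nhds 0) :=
    Real.tendsto_exp_atBot.comp h1
  have h3 := h2.const_mul (Real.sqrt (2 * Real.pi))⁻¹
  rw [mul_zero] at h3
  exact h3

lemma pdf_tendsto_atBot : Tendsto stdNormalPDF atBot (nhds 0) := by
  have h := pdf_tendsto_atTop.comp tendsto_neg_atBot_atTop
  have : stdNormalPDF ∘ Neg.neg = stdNormalPDF := by
    funext z; exact pdf_even z
  rwa [this] at h

lemma pdf_pos (z : ℝ) : 0 < stdNormalPDF z := by unfold stdNormalPDF; positivity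
lemma pdf_nonneg (z : ℝ) : 0 ≤ stdNormalPDF z := (pdf_pos z).le
lemma continuous_pdf : Continuous stdNormalPDF := by unfold stdNormalPDF; fun_prop
lemma integrable_pdf : Integrable stdNormalPDF := by
  have h := (integrable_exp_neg_mul_sq (by norm_num : (0:ℝ) < 1/2)).const_mul
    (Real.sqrt (2 * Real.pi))⁻¹
  convert h using 2 with z
  unfold stdNormalPDF; ring_nf
lemma integral_pdf : ∫ z, stdNormalPDF z = 1 := by
  unfold stdNormalPDF
  rw [MeasureTheory.integral_const_mul]
  have : ∀ z : ℝ, Real.exp (-z ^ 2 / 2) = Real.exp (-(1/2) * z ^ 2) := fun z => by ring_nf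
  simp_rw [this, integral_gaussian]
  rw [inv_mul_eq_one₀ (by positivity), show Real.pi / (1/2) = 2 * Real.pi by ring]

lemma cdf_nonneg (z : ℝ) : 0 ≤ stdNormalCDF z := integral_nonneg fun t => pdf_nonneg t

lemma cdf_le_one (z : ℝ) : stdNormalCDF z ≤ 1 := by
  rw [← integral_pdf]
  exact setIntegral_le_integral integrable_pdf (Eventually.of_forall fun t => pdf_nonneg t)

lemma cdf_pos (z : ℝ) : 0 < stdNormalCDF z := by
  unfold stdNormalCDF
  rw [setIntegral_pos_iff_support_of_nonneg_ae
    (Eventually.of_forall fun t => pdf_nonneg t) integrable_pdf.integrableOn]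
  have : Function.support stdNormalPDF = Set.univ := by
    ext t; simp [(pdf_pos t).ne']
  rw [this, Set.univ_inter]
  simp [Real.volume_Iic]

lemma cdf_eq (x : ℝ) : stdNormalCDF x = stdNormalCDF 0 + ∫ t in (0:ℝ)..x, stdNormalPDF t := by
  rw [← intervalIntegral.integral_Iic_sub_Iic integrable_pdf.integrableOn
    integrable_pdf.integrableOn]
  unfold stdNormalCDF; ring

lemma cdf_hasDerivAt (x : ℝ) : HasDerivAt stdNormalCDF (stdNormalPDF x) x := by
  have h : HasDerivAt (fun y => ∫ t in (0:ℝ)..y, stdNormalPDF t) (stdNormalPDF x) x :=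
    intervalIntegral.integral_hasDerivAt_right
      (integrable_pdf.intervalIntegrable)
      continuous_pdf.aestronglyMeasurable.stronglyMeasurableAtFilter
      continuous_pdf.continuousAt
  have := h.const_add (stdNormalCDF 0)
  refine HasDerivAt.congr_of_eventuallyEq this ?_
  filter_upwards with y using (cdf_eq y)

lemma continuous_cdf : Continuous stdNormalCDF :=
  continuous_iff_continuousAt.2 fun x => (cdf_hasDerivAt x).continuousAt

lemma pdf_hasDerivAt (x : ℝ) : HasDerivAt stdNormalPDF (-x * stdNormalPDF x) x := by
  unfold stdNormalPDF
  have h1 : HasDerivAt (fun z : ℝ => -z ^ 2 / 2) (-x) x := by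
    have := ((hasDerivAt_pow 2 x).neg).div_const 2
    simpa using this.congr_deriv (by ring)
  have := (h1.exp).const_mul (Real.sqrt (2 * Real.pi))⁻¹
  exact this.congr_deriv (by ring)

lemma gauss_conv (β v : ℝ) :
    ∫ u : ℝ, stdNormalPDF (v + β * u) * stdNormalPDF u
      = stdNormalPDF (v / Real.sqrt (1 + β ^ 2)) / Real.sqrt (1 + β ^ 2) := by
  set c : ℝ := 1 + β ^ 2 with hc_def
  have hc : 0 < c := by positivity
  set d : ℝ := β * v / c with hd_def
  have key : ∀ u : ℝ, stdNormalPDF (v + β * u) * stdNormalPDF u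
      = ((Real.sqrt (2 * Real.pi))⁻¹ * (Real.sqrt (2 * Real.pi))⁻¹ * Real.exp (-v ^ 2 / (2 * c)))
        * Real.exp (-(c / 2) * (u + d) ^ 2) := by
    intro u
    have hexp : Real.exp (-(v + β * u) ^ 2 / 2) * Real.exp (-u ^ 2 / 2)
        = Real.exp (-v ^ 2 / (2 * c)) * Real.exp (-(c / 2) * (u + d) ^ 2) := by
      rw [← Real.exp_add, ← Real.exp_add]
      congr 1
      rw [hd_def, hc_def]
      field_simp
      ring
    unfold stdNormalPDF
    rw [mul_mul_mul_comm, hexp]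
    ring
  rw [integral_congr_ae (Eventually.of_forall key), MeasureTheory.integral_const_mul]
  have htrans : ∫ u : ℝ, Real.exp (-(c / 2) * (u + d) ^ 2)
      = ∫ u : ℝ, Real.exp (-(c / 2) * u ^ 2) :=
    integral_add_right_eq_self (fun u => Real.exp (-(c / 2) * u ^ 2)) d
  rw [htrans, integral_gaussian]
  have h1 : Real.sqrt (Real.pi / (c / 2)) = Real.sqrt (2 * Real.pi) / Real.sqrt c := by
    rw [show Real.pi / (c / 2) = 2 * Real.pi / c by field_simp,
      Real.sqrt_div (by positivity) c]
  rw [h1]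
  unfold stdNormalPDF
  rw [div_pow, Real.sq_sqrt hc.le]
  have h2π : (0:ℝ) < Real.sqrt (2 * Real.pi) := Real.sqrt_pos.2 (by positivity)
  have hsc : (0:ℝ) < Real.sqrt c := Real.sqrt_pos.2 hc
  field_simp

lemma pdf_le (z : ℝ) : stdNormalPDF z ≤ (Real.sqrt (2 * Real.pi))⁻¹ := by
  unfold stdNormalPDF
  have h1 : Real.exp (-z ^ 2 / 2) ≤ 1 := by
    rw [Real.exp_le_one_iff]
    nlinarith [sq_nonneg z]
  nlinarith [Real.sqrt_pos.2 (show (0:ℝ) < 2 * Real.pi by positivity), Real.exp_pos (-z^2/2),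
    inv_pos.2 (Real.sqrt_pos.2 (show (0:ℝ) < 2 * Real.pi by positivity))]

-- integrability of u * pdf u bound
lemma integrable_abs_mul_pdf : Integrable (fun u : ℝ => |u| * stdNormalPDF u) := by
  have h := ((integrable_mul_exp_neg_mul_sq (by norm_num : (0:ℝ) < 1/2)).abs).const_mul
    (Real.sqrt (2 * Real.pi))⁻¹
  refine h.congr (Eventually.of_forall fun u => ?_)
  unfold stdNormalPDF
  simp only [abs_mul, abs_of_nonneg (Real.exp_pos _).le]
  rw [show -(1/2 : ℝ) * u ^ 2 = -u ^ 2 / 2 by ring]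
  ring

lemma integrable_mul_pdf_cdf (α β : ℝ) :
    Integrable (fun u : ℝ => u * stdNormalPDF u * stdNormalCDF (α + β * u)) := by
  refine Integrable.mono' integrable_abs_mul_pdf ?_ (Eventually.of_forall fun u => ?_)
  · exact (continuous_id.mul continuous_pdf |>.mul
      (continuous_cdf.comp (by fun_prop))).aestronglyMeasurable
  · rw [Real.norm_eq_abs, abs_mul, abs_mul]
    rw [abs_of_nonneg (pdf_nonneg u), abs_of_nonneg (cdf_nonneg _)]
    calc |u| * stdNormalPDF u * stdNormalCDF (α + β * u)
        ≤ |u| * stdNormalPDF u * 1 :=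
          mul_le_mul_of_nonneg_left (cdf_le_one _) (mul_nonneg (abs_nonneg u) (pdf_nonneg u))
      _ = |u| * stdNormalPDF u := by ring

lemma integrable_pdf_mul_pdf (α β : ℝ) :
    Integrable (fun u : ℝ => stdNormalPDF (α + β * u) * stdNormalPDF u) := by
  refine Integrable.mono' (integrable_pdf.const_mul (Real.sqrt (2 * Real.pi))⁻¹)
    ?_ (Eventually.of_forall fun u => ?_)
  · exact ((continuous_pdf.comp (by fun_prop)).mul continuous_pdf).aestronglyMeasurable
  · rw [Real.norm_eq_abs, abs_mul, abs_of_nonneg (pdf_nonneg _), abs_of_nonneg (pdf_nonneg _)]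
    exact mul_le_mul_of_nonneg_right (pdf_le _) (pdf_nonneg u)

lemma integable_cdf_mul_pdf (α β : ℝ) :
    Integrable (fun u : ℝ => stdNormalCDF (α + β * u) * stdNormalPDF u) := by
  refine Integrable.mono' integrable_pdf ?_ (Eventually.of_forall fun u => ?_)
  · exact ((continuous_cdf.comp (by fun_prop)).mul continuous_pdf).aestronglyMeasurable
  · rw [Real.norm_eq_abs, abs_mul, abs_of_nonneg (pdf_nonneg _), abs_of_nonneg (cdf_nonneg _)]
    calc stdNormalCDF (α + β * u) * stdNormalPDF u ≤ 1 * stdNormalPDF u :=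
        mul_le_mul_of_nonneg_right (cdf_le_one _) (pdf_nonneg u)
      _ = stdNormalPDF u := one_mul _

lemma parts (α β : ℝ) :
    ∫ u : ℝ, u * stdNormalPDF u * stdNormalCDF (α + β * u)
      = β * (stdNormalPDF (α / Real.sqrt (1 + β ^ 2)) / Real.sqrt (1 + β ^ 2)) := by
  set H : ℝ → ℝ := fun u => -stdNormalPDF u * stdNormalCDF (α + β * u) with hH_def
  set h : ℝ → ℝ := fun u => u * stdNormalPDF u * stdNormalCDF (α + β * u)
    - β * (stdNormalPDF (α + β * u) * stdNormalPDF u) with hh_def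
  have hderiv : ∀ x : ℝ, HasDerivAt H (h x) x := by
    intro x
    have h2 : HasDerivAt (fun u : ℝ => α + β * u) β x := by
      simpa using ((hasDerivAt_id x).const_mul β).const_add α
    have h3 : HasDerivAt (fun u : ℝ => stdNormalCDF (α + β * u))
        (stdNormalPDF (α + β * x) * β) x := HasDerivAt.comp (h₂ := stdNormalCDF) x (cdf_hasDerivAt (α + β * x)) h2
    have h4 := ((pdf_hasDerivAt x).neg).mul h3
    refine h4.congr_deriv ?_
    simp only [hh_def, Pi.neg_apply]
    ring
  have hint : Integrable h :=
    (integrable_mul_pdf_cdf α β).sub ((integrable_pdf_mul_pdf α β).const_mul β)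
  have hbound : ∀ u : ℝ, ‖H u‖ ≤ stdNormalPDF u := by
    intro u
    rw [hH_def]
    simp only [norm_mul, norm_neg, Real.norm_eq_abs, abs_of_nonneg (pdf_nonneg u),
      abs_of_nonneg (cdf_nonneg _)]
    calc stdNormalPDF u * stdNormalCDF (α + β * u) ≤ stdNormalPDF u * 1 :=
        mul_le_mul_of_nonneg_left (cdf_le_one _) (pdf_nonneg u)
      _ = stdNormalPDF u := mul_one _
  have htop : Tendsto H atTop (nhds 0) :=
    squeeze_zero_norm hbound pdf_tendsto_atTop
  have hbot : Tendsto H atBot (nhds 0) :=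
    squeeze_zero_norm hbound pdf_tendsto_atBot
  have hIic : ∫ u in Iic (0:ℝ), h u = H 0 - 0 :=
    integral_Iic_of_hasDerivAt_of_tendsto (hderiv 0).continuousAt.continuousWithinAt
      (fun x _ => hderiv x) hint.integrableOn hbot
  have hIoi : ∫ u in Ioi (0:ℝ), h u = 0 - H 0 :=
    integral_Ioi_of_hasDerivAt_of_tendsto (hderiv 0).continuousAt.continuousWithinAt
      (fun x _ => hderiv x) hint.integrableOn htop
  have htotal : ∫ u : ℝ, h u = 0 := by
    rw [← intervalIntegral.integral_Iic_add_Ioi hint.integrableOn hint.integrableOn, hIic, hIoi]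
    ring
  have hsub : ∫ u : ℝ, h u
      = (∫ u : ℝ, u * stdNormalPDF u * stdNormalCDF (α + β * u))
        - β * ∫ u : ℝ, stdNormalPDF (α + β * u) * stdNormalPDF u := by
    rw [hh_def]
    rw [integral_sub (integrable_mul_pdf_cdf α β) ((integrable_pdf_mul_pdf α β).const_mul β),
      MeasureTheory.integral_const_mul]
  rw [htotal] at hsub
  have := sub_eq_zero.1 hsub.symm
  rw [this, gauss_conv]

lemma integral_comp_mul_left_Iic' (g : ℝ → ℝ) (a : ℝ) {b : ℝ} (hb : 0 < b) :
    (∫ x in Iic a, g (b * x)) = b⁻¹ • ∫ x in Iic (b * a), g x := by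
  rw [← integral_indicator measurableSet_Iic, ← integral_indicator measurableSet_Iic,
    ← abs_of_pos (inv_pos.mpr hb), ← Measure.integral_comp_mul_left]
  congr 1
  ext1 x
  rw [← indicator_comp_right, show (HMul.hMul b : ℝ → ℝ) ⁻¹' Iic (b * a) = (fun x => b * x) ⁻¹' Iic (b * a) from rfl,
    preimage_const_mul_Iic₀ _ hb, mul_comm b a,
    mul_div_cancel_right₀ _ hb.ne']
  rfl

lemma integrable_pdf_comp_add (d : ℝ) : Integrable (fun v : ℝ => stdNormalPDF (v + d)) :=
  integrable_pdf.comp_add_right d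

lemma integral_pdf_comp_add (d : ℝ) : ∫ v : ℝ, stdNormalPDF (v + d) = 1 := by
  rw [integral_add_right_eq_self stdNormalPDF d, integral_pdf]

lemma cdf_as_indicator (α β u : ℝ) :
    stdNormalCDF (α + β * u)
      = ∫ v : ℝ, Set.indicator (Iic α) (fun v => stdNormalPDF (v + β * u)) v := by
  unfold stdNormalCDF
  rw [← integral_indicator measurableSet_Iic]
  rw [← integral_add_right_eq_self (fun t => Set.indicator (Iic (α + β * u)) stdNormalPDF t) (β * u)]
  congr 1
  funext v
  simp only [Set.indicator_apply, mem_Iic, add_le_add_iff_right]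

lemma const_int (α β : ℝ) :
    ∫ u : ℝ, stdNormalCDF (α + β * u) * stdNormalPDF u
      = stdNormalCDF (α / Real.sqrt (1 + β ^ 2)) := by
  set c : ℝ := Real.sqrt (1 + β ^ 2) with hc_def
  have hcpos : 0 < c := Real.sqrt_pos.2 (by positivity)
  set F : ℝ × ℝ → ℝ := fun p =>
    Set.indicator (Iic α) (fun v => stdNormalPDF (v + β * p.1)) p.2 * stdNormalPDF p.1 with hF_def
  have hF_eq : F = Set.indicator {p : ℝ × ℝ | p.2 ≤ α}
      (fun p => stdNormalPDF (p.2 + β * p.1) * stdNormalPDF p.1) := by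
    funext p
    by_cases hp : p.2 ≤ α <;>
      simp [hF_def, Set.indicator_apply, hp]
  have hFmeas : AEStronglyMeasurable F (volume : Measure (ℝ × ℝ)) := by
    rw [hF_eq]
    refine AEStronglyMeasurable.indicator ?_ ?_
    · exact ((continuous_pdf.comp (by fun_prop)).mul
        (continuous_pdf.comp continuous_fst)).aestronglyMeasurable
    · exact measurable_snd measurableSet_Iic
  have hFmeas' : AEStronglyMeasurable F ((volume : Measure ℝ).prod (volume : Measure ℝ)) := by
    rwa [← MeasureTheory.Measure.volume_eq_prod]
  have hF_nonneg : ∀ p : ℝ × ℝ, 0 ≤ F p := by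
    intro p
    exact mul_nonneg (Set.indicator_nonneg (fun v _ => pdf_nonneg _) _) (pdf_nonneg _)
  have hFint : Integrable F (volume : Measure (ℝ × ℝ)) := by
    rw [MeasureTheory.Measure.volume_eq_prod]
    refine (integrable_prod_iff hFmeas').2 ⟨?_, ?_⟩
    · refine Eventually.of_forall fun u => ?_
      exact ((integrable_pdf_comp_add (β * u)).indicator
        (measurableSet_Iic (a := α))).mul_const (stdNormalPDF u)
    · refine Integrable.mono' integrable_pdf (hFmeas'.norm.integral_prod_right') ?_
      refine Eventually.of_forall fun u => ?_
      rw [Real.norm_eq_abs, abs_of_nonneg (integral_nonneg fun v => norm_nonneg _)]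
      have heq : ∀ v : ℝ, ‖F (u, v)‖ = Set.indicator (Iic α)
          (fun v => stdNormalPDF (v + β * u)) v * stdNormalPDF u := fun v =>
        abs_of_nonneg (hF_nonneg (u, v))
      have h2 : (∫ v : ℝ, ‖F (u, v)‖)
          = (∫ v : ℝ, Set.indicator (Iic α) (fun v => stdNormalPDF (v + β * u)) v)
            * stdNormalPDF u := by
        rw [← integral_mul_const]
        exact integral_congr_ae (Eventually.of_forall heq)
      have h3 : (∫ v : ℝ, Set.indicator (Iic α) (fun v => stdNormalPDF (v + β * u)) v) ≤ 1 := by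
        rw [integral_indicator measurableSet_Iic, ← integral_pdf_comp_add (β * u)]
        exact setIntegral_le_integral (integrable_pdf_comp_add (β * u))
          (Eventually.of_forall fun v => pdf_nonneg _)
      rw [h2]
      calc  (∫ v : ℝ, Set.indicator (Iic α) (fun v => stdNormalPDF (v + β * u)) v)
            * stdNormalPDF u ≤ 1 * stdNormalPDF u :=
          mul_le_mul_of_nonneg_right h3 (pdf_nonneg u)
        _ = stdNormalPDF u := one_mul _
  have hswap : ∫ u : ℝ, ∫ v : ℝ, F (u, v) = ∫ v : ℝ, ∫ u : ℝ, F (u, v) := by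
    apply integral_integral_swap
    rw [← MeasureTheory.Measure.volume_eq_prod] at *
    exact hFint
  have hleft : ∫ u : ℝ, ∫ v : ℝ, F (u, v)
      = ∫ u : ℝ, stdNormalCDF (α + β * u) * stdNormalPDF u := by
    congr 1
    funext u
    rw [cdf_as_indicator α β u, ← integral_mul_const]
  have hright : ∫ v : ℝ, ∫ u : ℝ, F (u, v)
      = ∫ v in Iic α, stdNormalPDF (v / c) / c := by
    rw [← integral_indicator measurableSet_Iic]
    congr 1
    funext v
    by_cases hv : v ≤ α
    · have : ∀ u : ℝ, F (u, v) = stdNormalPDF (v + β * u) * stdNormalPDF u := by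
        intro u; simp [hF_def, Set.indicator_apply, hv]
      rw [integral_congr_ae (Eventually.of_forall this), gauss_conv β v,
        Set.indicator_of_mem (mem_Iic.2 hv)]
    · have : ∀ u : ℝ, F (u, v) = 0 := by
        intro u; simp [hF_def, Set.indicator_apply, hv]
      rw [integral_congr_ae (Eventually.of_forall this), integral_zero,
        Set.indicator_of_notMem (by simpa using hv)]
  have hfinal : ∫ v in Iic α, stdNormalPDF (v / c) / c = stdNormalCDF (α / c) := by
    have h1 : ∀ v : ℝ, stdNormalPDF (v / c) / c = c⁻¹ * stdNormalPDF (c⁻¹ * v) := by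
      intro v
      rw [inv_mul_eq_div c v, div_eq_mul_inv (stdNormalPDF (v / c)) c, mul_comm]
    simp_rw [h1]
    rw [MeasureTheory.integral_const_mul, integral_comp_mul_left_Iic' stdNormalPDF α
      (inv_pos.2 hcpos)]
    rw [smul_eq_mul, inv_inv]
    rw [← mul_assoc, inv_mul_cancel₀ hcpos.ne', one_mul]
    unfold stdNormalCDF
    rw [inv_mul_eq_div]
  rw [← hleft, hswap, hright, hfinal]


lemma integral_affine (g : ℝ → ℝ) {s : ℝ} (hs : 0 < s) (m : ℝ) :
    ∫ x : ℝ, g x = s * ∫ u : ℝ, g (s * u + m) := by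
  have h1 : ∫ x : ℝ, g (x + m) = ∫ x : ℝ, g x := integral_add_right_eq_self g m
  have h2 : ∫ u : ℝ, (fun x => g (x + m)) (s * u)
      = |s⁻¹| • ∫ x : ℝ, g (x + m) :=
    Measure.integral_comp_mul_left (fun x => g (x + m)) s
  simp only [] at h2
  rw [h1, abs_of_pos (inv_pos.2 hs), smul_eq_mul] at h2
  rw [h2, ← mul_assoc, mul_inv_cancel₀ hs.ne', one_mul]

theorem stmt_15 (m s a b ω ybar : ℝ) (hs : 0 < s) (hω : 0 < ω)
    (ε : ℝ) (hε : ε = 1 ∨ ε = -1)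
    (f : ℝ → ℝ)
    (hf : ∀ θ, f θ = stdNormalCDF (ε * (a + b * θ - ybar) / ω) * stdNormalPDF ((θ - m) / s)
        / (s * stdNormalCDF (ε * (a + b * m - ybar) / Real.sqrt (ω ^ 2 + s ^ 2 * b ^ 2)))) :
    ∫ θ : ℝ, θ * f θ
      = m + ε * b * s ^ 2 / Real.sqrt (ω ^ 2 + s ^ 2 * b ^ 2)
          * (stdNormalPDF ((a + b * m - ybar) / Real.sqrt (ω ^ 2 + s ^ 2 * b ^ 2))
            / stdNormalCDF (ε * (a + b * m - ybar) / Real.sqrt (ω ^ 2 + s ^ 2 * b ^ 2))) := by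
  have hε2 : ε ^ 2 = 1 := by rcases hε with h | h <;> simp [h]
  have hεne : ε ≠ 0 := by rcases hε with h | h <;> simp [h]
  have hW : (0:ℝ) < ω ^ 2 + s ^ 2 * b ^ 2 := by positivity
  have hsW : (0:ℝ) < Real.sqrt (ω ^ 2 + s ^ 2 * b ^ 2) := Real.sqrt_pos.2 hW
  set α : ℝ := ε * (a + b * m - ybar) / ω with hα_def
  set β : ℝ := ε * b * s / ω with hβ_def
  have hγ : Real.sqrt (1 + β ^ 2) = Real.sqrt (ω ^ 2 + s ^ 2 * b ^ 2) / ω := by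
    rw [hβ_def]
    rw [show 1 + (ε * b * s / ω) ^ 2 = (ω ^ 2 + s ^ 2 * b ^ 2) / ω ^ 2 by
      field_simp
      nlinarith [hε2]]
    rw [Real.sqrt_div hW.le, Real.sqrt_sq hω.le]
  have hαγ : α / Real.sqrt (1 + β ^ 2)
      = ε * (a + b * m - ybar) / Real.sqrt (ω ^ 2 + s ^ 2 * b ^ 2) := by
    rw [hγ, hα_def]
    field_simp
  have hβγ : β / Real.sqrt (1 + β ^ 2) = ε * b * s / Real.sqrt (ω ^ 2 + s ^ 2 * b ^ 2) := by
    rw [hγ, hβ_def]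
    field_simp
  have hΦpos := cdf_pos (ε * (a + b * m - ybar) / Real.sqrt (ω ^ 2 + s ^ 2 * b ^ 2))
  set Φ₀ : ℝ := stdNormalCDF (ε * (a + b * m - ybar) / Real.sqrt (ω ^ 2 + s ^ 2 * b ^ 2))
    with hΦ_def
  -- pointwise identity after substitution
  have hpoint : ∀ u : ℝ, (s * u + m) * f (s * u + m)
      = (s * (u * stdNormalPDF u * stdNormalCDF (α + β * u))
          + m * (stdNormalCDF (α + β * u) * stdNormalPDF u)) * (s * Φ₀)⁻¹ := by
    intro u
    rw [hf]
    have e1 : (s * u + m - m) / s = u := by field_simp; ring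
    have e2 : ε * (a + b * (s * u + m) - ybar) / ω = α + β * u := by
      rw [hα_def, hβ_def]
      field_simp
      ring
    rw [e1, e2, div_eq_mul_inv, hΦ_def]
    ring
  have hcv : ∫ θ : ℝ, θ * f θ = s * ∫ u : ℝ, (s * u + m) * f (s * u + m) :=
    integral_affine (fun θ => θ * f θ) hs m
  have hint : ∫ u : ℝ, (s * u + m) * f (s * u + m)
      = (s * (β * (stdNormalPDF (α / Real.sqrt (1 + β ^ 2)) / Real.sqrt (1 + β ^ 2)))
          + m * stdNormalCDF (α / Real.sqrt (1 + β ^ 2))) * (s * Φ₀)⁻¹ := by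
    rw [integral_congr_ae (Eventually.of_forall hpoint), integral_mul_const,
      integral_add ((integrable_mul_pdf_cdf α β).const_mul s)
        ((integable_cdf_mul_pdf α β).const_mul m),
      MeasureTheory.integral_const_mul, MeasureTheory.integral_const_mul, parts, const_int]
  have hpdf_even : stdNormalPDF (ε * (a + b * m - ybar) / Real.sqrt (ω ^ 2 + s ^ 2 * b ^ 2))
      = stdNormalPDF ((a + b * m - ybar) / Real.sqrt (ω ^ 2 + s ^ 2 * b ^ 2)) := by
    rcases hε with h | h
    · rw [h, one_mul]
    · rw [h]
      rw [show (-1 : ℝ) * (a + b * m - ybar) / Real.sqrt (ω ^ 2 + s ^ 2 * b ^ 2)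
        = -((a + b * m - ybar) / Real.sqrt (ω ^ 2 + s ^ 2 * b ^ 2)) by ring]
      exact pdf_even _
  rw [hcv, hint, hαγ]
  rw [show s * (β * (stdNormalPDF (ε * (a + b * m - ybar) / Real.sqrt (ω ^ 2 + s ^ 2 * b ^ 2))
      / Real.sqrt (1 + β ^ 2)))
    = s * (β / Real.sqrt (1 + β ^ 2))
      * stdNormalPDF (ε * (a + b * m - ybar) / Real.sqrt (ω ^ 2 + s ^ 2 * b ^ 2)) by ring,
    hβγ, hpdf_even, ← hΦ_def]
  field_simp
  ring
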